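/- In a finite-horizon MDP, let π and π* be stochastic policies with π(a|s) > 0 for all s, a, let f : ℝ → ℝ be convex on [0,∞), and suppose the associated f-divergence satisfies the triangle inequality: for every finite nonempty set X and all probability distributions p, q, r on X that are strictly positive, D_f(p‖q) ≤ D_f(p‖r) + D_f(r‖q), where D_f(p‖q) = ∑_x q(x)·f(p(x)/q(x)). Assume additionally ρ₀(s) > 0, P(s'|s,a) > 0 and π*(a|s) > 0 for all s, s', a. Then the f-divergence between trajectory distributions is upper bounded by the expected per-state action-distribution divergence: ∑_τ ρ_π(τ)·f(ρ_{π*}(τ)/ρ_π(τ)) ≤ T · ∑_{s∈S} ρ_π(s) · ∑_{a∈A} π(a|s)·f(π*(a|s)/π(a|s)). -/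
import Mathlib

noncomputable section

/-- Time-`t` state distribution of a policy `π` in a finite MDP:
`ρ_π^0 = ρ₀` and `ρ_π^{t+1}(s) = ∑_{s',a} ρ_π^t(s') · π(a|s') · P(s|s',a)`. -/
def stateDist {S A : Type*} [Fintype S] [Fintype A]
    (ρ₀ : S → ℝ) (P : S → A → S → ℝ) (π : S → A → ℝ) : ℕ → S → ℝ
  | 0 => ρ₀
  | t + 1 => fun s => ∑ s' : S, ∑ a : A, stateDist ρ₀ P π t s' * π s' a * P s' a s

/-- Average state distribution `ρ_π(s) = (1/T) ∑_{t=1}^T ρ_π^{t-1}(s)`. -/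
def avgStateDist {S A : Type*} [Fintype S] [Fintype A]
    (ρ₀ : S → ℝ) (P : S → A → S → ℝ) (π : S → A → ℝ) (T : ℕ) (s : S) : ℝ :=
  (1 / (T : ℝ)) * ∑ t ∈ Finset.range T, stateDist ρ₀ P π t s

/-- The state `s_{t-1}` preceding the `t`-th action in the trajectory
`τ = (s₀, a₁, s₁, …, a_T, s_T)`, encoded as `τ = (s₀, fun t => (a_{t+1}, s_{t+1}))`. -/
def prevState {S A : Type*} {T : ℕ} (τ : S × (Fin T → A × S)) (t : Fin T) : S :=
  if _h : (t : ℕ) = 0 then τ.1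
  else (τ.2 ⟨(t : ℕ) - 1, lt_of_le_of_lt (Nat.pred_le _) t.isLt⟩).2

/-- Probability of a trajectory `τ = (s₀, a₁, s₁, …, a_T, s_T)` induced by policy `π`:
`ρ_π(τ) = ρ₀(s₀) ∏_{t=1}^T π(a_t|s_{t-1}) P(s_t|s_{t-1},a_t)`. -/
def trajProb {S A : Type*} {T : ℕ}
    (ρ₀ : S → ℝ) (P : S → A → S → ℝ) (π : S → A → ℝ) (τ : S × (Fin T → A × S)) : ℝ :=
  ρ₀ τ.1 * ∏ t : Fin T,
    (π (prevState τ t) (τ.2 t).1 * P (prevState τ t) (τ.2 t).1 (τ.2 t).2)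

namespace TrajAux

variable {S A : Type} [Fintype S] [Nonempty S] [Fintype A] [Nonempty A]

/-- Suffix weight of a trajectory tail starting at state `s`, with time-varying kernel `K`. -/
def Wgen (K : ℕ → S → A × S → ℝ) (T : ℕ) (s : S) (w : Fin T → A × S) : ℝ :=
  ∏ t : Fin T, K t (prevState ((s, w) : S × (Fin T → A × S)) t) (w t)

lemma prevState_cons (T : ℕ) (s : S) (x : A × S) (w : Fin T → A × S) (t : Fin T) :
    prevState ((s, Fin.cons x w) : S × (Fin (T + 1) → A × S)) t.succ
      = prevState ((x.2, w) : S × (Fin T → A × S)) t := by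
  unfold prevState
  rw [dif_neg (by simp [Fin.val_succ])]
  by_cases h : (t : ℕ) = 0
  · rw [dif_pos h]
    have h1 : (⟨((t.succ : Fin (T + 1)) : ℕ) - 1, by omega⟩ : Fin (T + 1)) = 0 := by
      apply Fin.ext; simp [Fin.val_succ, h]
    rw [h1]; simp
  · rw [dif_neg h]
    have h1 : (⟨((t.succ : Fin (T + 1)) : ℕ) - 1, by omega⟩ : Fin (T + 1))
        = Fin.succ ⟨(t : ℕ) - 1, by omega⟩ := by
      apply Fin.ext; simp [Fin.val_succ]; omega
    rw [h1]; simp only [Fin.cons_succ]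

lemma prevState_zero (T : ℕ) (τ : S × (Fin (T + 1) → A × S)) :
    prevState τ 0 = τ.1 := by
  unfold prevState
  simp

lemma Wgen_cons (K : ℕ → S → A × S → ℝ) (T : ℕ) (s : S) (x : A × S) (w : Fin T → A × S) :
    Wgen K (T + 1) s (Fin.cons x w) = K 0 s x * Wgen (fun t => K (t + 1)) T x.2 w := by
  unfold Wgen
  rw [Fin.prod_univ_succ]
  simp only [Fin.cons_zero, prevState_zero, Fin.val_zero]
  congr 1
  apply Finset.prod_congr rfl
  intro t _
  rw [prevState_cons, Fin.cons_succ, Fin.val_succ]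

lemma sum_tail (T : ℕ) (g : (Fin (T + 1) → A × S) → ℝ) :
    ∑ w : Fin (T + 1) → A × S, g w
      = ∑ x : A × S, ∑ w : Fin T → A × S, g (Fin.cons x w) := by
  rw [← Equiv.sum_comp (Fin.consEquiv fun _ => A × S) g, Fintype.sum_prod_type]
  rfl

lemma Wgen_pos (K : ℕ → S → A × S → ℝ) (hK : ∀ t s x, 0 < K t s x) (T : ℕ) (s : S)
    (w : Fin T → A × S) : 0 < Wgen K T s w :=
  Finset.prod_pos fun _ _ => hK _ _ _

lemma Wgen_sum_one (K : ℕ → S → A × S → ℝ) (hK : ∀ t s, ∑ x : A × S, K t s x = 1) :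
    ∀ (T : ℕ) (s : S), ∑ w : Fin T → A × S, Wgen K T s w = 1 := by
  intro T
  induction T generalizing K with
  | zero =>
      intro s
      simp [Wgen]
  | succ T ih =>
      intro s
      rw [sum_tail]
      have : ∀ x : A × S, ∑ w : Fin T → A × S, Wgen K (T + 1) s (Fin.cons x w) = K 0 s x := by
        intro x
        simp only [Wgen_cons]
        rw [← Finset.mul_sum, ih (fun t => K (t + 1)) (fun t s => hK (t + 1) s), mul_one]
      rw [Finset.sum_congr rfl fun x _ => this x, hK 0 s]

end TrajAux

open TrajAux

section Main

variable {S A : Type} [Fintype S] [Nonempty S] [Fintype A] [Nonempty A]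

/-- One-step kernel associated to a policy. -/
def kpol (π : S → A → ℝ) (P : S → A → S → ℝ) : S → A × S → ℝ :=
  fun s x => π s x.1 * P s x.1 x.2

/-- The tail f-divergence starting from state `s`. -/
def Efun (P : S → A → S → ℝ) (π πstar : S → A → ℝ) (f : ℝ → ℝ) (T : ℕ) (s : S) : ℝ :=
  ∑ w : Fin T → A × S,
    Wgen (fun _ => kpol π P) T s w *
      f (Wgen (fun _ => kpol πstar P) T s w / Wgen (fun _ => kpol π P) T s w)


lemma kpol_pos (π : S → A → ℝ) (P : S → A → S → ℝ)
    (hπ : ∀ s a, 0 < π s a) (hP : ∀ s a s', 0 < P s a s') :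
    ∀ (s : S) (x : A × S), 0 < kpol π P s x :=
  fun _ x => mul_pos (hπ _ x.1) (hP _ x.1 x.2)

lemma kpol_sum (π : S → A → ℝ) (P : S → A → S → ℝ)
    (hπ : ∀ s, ∑ a, π s a = 1) (hP : ∀ s a, ∑ s', P s a s' = 1) :
    ∀ s : S, ∑ x : A × S, kpol π P s x = 1 := by
  intro s
  rw [Fintype.sum_prod_type]
  have h : ∀ a : A, ∑ s' : S, kpol π P s (a, s') = π s a := by
    intro a
    show ∑ s' : S, π s a * P s a s' = π s a
    rw [← Finset.mul_sum, hP, mul_one]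
  rw [Finset.sum_congr rfl fun a _ => h a, hπ]

lemma Wgen_zero (K : ℕ → S → A × S → ℝ) (s : S) (w : Fin 0 → A × S) :
    Wgen K 0 s w = 1 := by
  simp [Wgen]

lemma Wgen_cons_const (k : S → A × S → ℝ) (T : ℕ) (s : S) (x : A × S) (w : Fin T → A × S) :
    Wgen (fun _ => k) (T + 1) s (Fin.cons x w) = k s x * Wgen (fun _ => k) T x.2 w :=
  Wgen_cons (fun _ => k) T s x w

lemma Efun_one (P : S → A → S → ℝ) (π πstar : S → A → ℝ) (f : ℝ → ℝ)
    (hPpos : ∀ s a s', 0 < P s a s') (hPsum : ∀ s a, ∑ s', P s a s' = 1) (s : S) :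
    Efun P π πstar f 1 s = ∑ a, π s a * f (πstar s a / π s a) := by
  unfold Efun
  rw [sum_tail]
  have key : ∀ (x : A × S) (w : Fin 0 → A × S),
      Wgen (fun _ => kpol π P) 1 s (Fin.cons x w) *
        f (Wgen (fun _ => kpol πstar P) 1 s (Fin.cons x w) /
          Wgen (fun _ => kpol π P) 1 s (Fin.cons x w))
      = π s x.1 * P s x.1 x.2 * f (πstar s x.1 / π s x.1) := by
    intro x w
    rw [Wgen_cons_const, Wgen_cons_const, Wgen_zero, Wgen_zero, mul_one, mul_one]
    show π s x.1 * P s x.1 x.2 * f (πstar s x.1 * P s x.1 x.2 / (π s x.1 * P s x.1 x.2)) = _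
    rw [mul_div_mul_right _ _ (ne_of_gt (hPpos s x.1 x.2))]
  rw [Finset.sum_congr rfl fun x _ => Finset.sum_congr rfl fun w _ => key x w]
  simp only [Finset.sum_const, Finset.card_univ, Fintype.card_unique, one_smul]
  rw [Fintype.sum_prod_type]
  have h : ∀ a : A, ∑ s' : S, π s a * P s a s' * f (πstar s a / π s a)
      = π s a * f (πstar s a / π s a) := by
    intro a
    rw [← Finset.sum_mul, ← Finset.mul_sum, hPsum, mul_one]
  exact Finset.sum_congr rfl fun a _ => h a

lemma Efun_step (P : S → A → S → ℝ) (π πstar : S → A → ℝ) (f : ℝ → ℝ)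
    (hPpos : ∀ s a s', 0 < P s a s') (hPsum : ∀ s a, ∑ s', P s a s' = 1)
    (hπpos : ∀ s a, 0 < π s a) (hπsum : ∀ s, ∑ a, π s a = 1)
    (hπstarpos : ∀ s a, 0 < πstar s a) (hπstarsum : ∀ s, ∑ a, πstar s a = 1)
    (htri : ∀ (X : Type) [Fintype X] [Nonempty X], ∀ p q r : X → ℝ,
      (∀ x, 0 < p x) → (∀ x, 0 < q x) → (∀ x, 0 < r x) →
      (∑ x, p x = 1) → (∑ x, q x = 1) → (∑ x, r x = 1) →
      ∑ x, q x * f (p x / q x) ≤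
        (∑ x, r x * f (p x / r x)) + ∑ x, q x * f (r x / q x))
    (T : ℕ) (s : S) :
    Efun P π πstar f (T + 1) s ≤ (∑ a, π s a * f (πstar s a / π s a))
      + ∑ a, ∑ s', π s a * P s a s' * Efun P π πstar f T s' := by
  have hkπpos := kpol_pos π P hπpos hPpos
  have hkstarpos := kpol_pos πstar P hπstarpos hPpos
  have hkπsum := kpol_sum π P hπsum hPsum
  have hkstarsum := kpol_sum πstar P hπstarsum hPsum
  have hKr_pos : ∀ (t : ℕ) (s : S) (x : A × S),
      0 < (fun t : ℕ => if t = 0 then kpol π P else kpol πstar P) t s x := by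
    intro t s x
    by_cases h : t = 0 <;> simp [h] <;> [exact hkπpos s x; exact hkstarpos s x]
  have hKr_sum : ∀ (t : ℕ) (s : S),
      ∑ x : A × S, (fun t : ℕ => if t = 0 then kpol π P else kpol πstar P) t s x = 1 := by
    intro t s
    by_cases h : t = 0 <;> simp [h] <;> [exact hkπsum s; exact hkstarsum s]
  have hKr_tail : (fun t : ℕ => (fun t : ℕ => if t = 0 then kpol π P else kpol πstar P) (t + 1))
      = (fun _ : ℕ => kpol πstar P) := by
    funext t; simp
  have main := htri (Fin (T + 1) → A × S)
    (fun w => Wgen (fun _ => kpol πstar P) (T + 1) s w)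
    (fun w => Wgen (fun _ => kpol π P) (T + 1) s w)
    (fun w => Wgen (fun t : ℕ => if t = 0 then kpol π P else kpol πstar P) (T + 1) s w)
    (fun w => Wgen_pos _ (fun _ => hkstarpos) _ _ w)
    (fun w => Wgen_pos _ (fun _ => hkπpos) _ _ w)
    (fun w => Wgen_pos _ hKr_pos _ _ w)
    (Wgen_sum_one _ (fun _ => hkstarsum) _ s)
    (Wgen_sum_one _ (fun _ => hkπsum) _ s)
    (Wgen_sum_one _ hKr_sum _ s)
  have hconsKr : ∀ (x : A × S) (w : Fin T → A × S),
      Wgen (fun t : ℕ => if t = 0 then kpol π P else kpol πstar P) (T + 1) s (Fin.cons x w)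
        = kpol π P s x * Wgen (fun _ => kpol πstar P) T x.2 w := by
    intro x w
    rw [Wgen_cons, hKr_tail]
    norm_num
  have eqA : ∑ w : Fin (T + 1) → A × S,
      Wgen (fun t : ℕ => if t = 0 then kpol π P else kpol πstar P) (T + 1) s w *
        f (Wgen (fun _ => kpol πstar P) (T + 1) s w /
          Wgen (fun t : ℕ => if t = 0 then kpol π P else kpol πstar P) (T + 1) s w)
      = ∑ a, π s a * f (πstar s a / π s a) := by
    rw [sum_tail]
    have key : ∀ (x : A × S) (w : Fin T → A × S),
        Wgen (fun t : ℕ => if t = 0 then kpol π P else kpol πstar P) (T + 1) s (Fin.cons x w) *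
          f (Wgen (fun _ => kpol πstar P) (T + 1) s (Fin.cons x w) /
            Wgen (fun t : ℕ => if t = 0 then kpol π P else kpol πstar P) (T + 1) s (Fin.cons x w))
        = π s x.1 * P s x.1 x.2 * f (πstar s x.1 / π s x.1) *
            Wgen (fun _ => kpol πstar P) T x.2 w := by
      intro x w
      rw [hconsKr, Wgen_cons_const]
      have hW := Wgen_pos (fun _ : ℕ => kpol πstar P) (fun _ => hkstarpos) T x.2 w
      rw [mul_div_mul_right _ _ (ne_of_gt hW)]
      show kpol π P s x * Wgen (fun _ => kpol πstar P) T x.2 w *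
          f (πstar s x.1 * P s x.1 x.2 / (π s x.1 * P s x.1 x.2)) = _
      rw [mul_div_mul_right _ _ (ne_of_gt (hPpos s x.1 x.2))]
      show π s x.1 * P s x.1 x.2 * Wgen (fun _ => kpol πstar P) T x.2 w *
          f (πstar s x.1 / π s x.1) = _
      ring
    rw [Finset.sum_congr rfl fun x _ => Finset.sum_congr rfl fun w _ => key x w]
    have collapse : ∀ x : A × S,
        ∑ w : Fin T → A × S, π s x.1 * P s x.1 x.2 * f (πstar s x.1 / π s x.1) *
          Wgen (fun _ => kpol πstar P) T x.2 w
        = π s x.1 * P s x.1 x.2 * f (πstar s x.1 / π s x.1) := by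
      intro x
      rw [← Finset.mul_sum, Wgen_sum_one _ (fun _ => hkstarsum) _ x.2, mul_one]
    rw [Finset.sum_congr rfl fun x _ => collapse x, Fintype.sum_prod_type]
    have h : ∀ a : A, ∑ s' : S, π s a * P s a s' * f (πstar s a / π s a)
        = π s a * f (πstar s a / π s a) := by
      intro a
      rw [← Finset.sum_mul, ← Finset.mul_sum, hPsum, mul_one]
    exact Finset.sum_congr rfl fun a _ => h a
  have eqB : ∑ w : Fin (T + 1) → A × S,
      Wgen (fun _ => kpol π P) (T + 1) s w *
        f (Wgen (fun t : ℕ => if t = 0 then kpol π P else kpol πstar P) (T + 1) s w /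
          Wgen (fun _ => kpol π P) (T + 1) s w)
      = ∑ a, ∑ s', π s a * P s a s' * Efun P π πstar f T s' := by
    rw [sum_tail]
    have key : ∀ (x : A × S) (w : Fin T → A × S),
        Wgen (fun _ => kpol π P) (T + 1) s (Fin.cons x w) *
          f (Wgen (fun t : ℕ => if t = 0 then kpol π P else kpol πstar P) (T + 1) s (Fin.cons x w) /
            Wgen (fun _ => kpol π P) (T + 1) s (Fin.cons x w))
        = kpol π P s x * (Wgen (fun _ => kpol π P) T x.2 w *
            f (Wgen (fun _ => kpol πstar P) T x.2 w / Wgen (fun _ => kpol π P) T x.2 w)) := by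
      intro x w
      rw [hconsKr, Wgen_cons_const]
      rw [mul_div_mul_left _ _ (ne_of_gt (hkπpos s x))]
      ring
    rw [Finset.sum_congr rfl fun x _ => Finset.sum_congr rfl fun w _ => key x w]
    have collapse : ∀ x : A × S,
        ∑ w : Fin T → A × S, kpol π P s x * (Wgen (fun _ => kpol π P) T x.2 w *
            f (Wgen (fun _ => kpol πstar P) T x.2 w / Wgen (fun _ => kpol π P) T x.2 w))
        = kpol π P s x * Efun P π πstar f T x.2 := by
      intro x
      rw [← Finset.mul_sum]
      rfl
    rw [Finset.sum_congr rfl fun x _ => collapse x, Fintype.sum_prod_type]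
    rfl
  calc Efun P π πstar f (T + 1) s
      ≤ _ + _ := main
    _ = _ := by rw [eqA, eqB]

end Main


section Main2

variable {S A : Type} [Fintype S] [Nonempty S] [Fintype A] [Nonempty A]

lemma stateDist_succ_eq (ρ₀ : S → ℝ) (P : S → A → S → ℝ) (π : S → A → ℝ) (t : ℕ) :
    stateDist ρ₀ P π (t + 1)
      = fun s => ∑ s' : S, ∑ a : A, stateDist ρ₀ P π t s' * π s' a * P s' a s := rfl

lemma stateDist_shift (ρ₀ : S → ℝ) (P : S → A → S → ℝ) (π : S → A → ℝ) (t : ℕ) :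
    stateDist (stateDist ρ₀ P π 1) P π t = stateDist ρ₀ P π (t + 1) := by
  induction t with
  | zero => rfl
  | succ t ih =>
      have h1 : stateDist (stateDist ρ₀ P π 1) P π (t + 1)
          = fun s => ∑ s' : S, ∑ a : A,
              stateDist (stateDist ρ₀ P π 1) P π t s' * π s' a * P s' a s := rfl
      rw [h1, ih]
      rfl

lemma stateDist_nonneg (ρ₀ : S → ℝ) (P : S → A → S → ℝ) (π : S → A → ℝ)
    (hρ : ∀ s, 0 ≤ ρ₀ s) (hπ : ∀ s a, 0 ≤ π s a) (hP : ∀ s a s', 0 ≤ P s a s') :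
    ∀ (t : ℕ) (s : S), 0 ≤ stateDist ρ₀ P π t s := by
  intro t
  induction t with
  | zero => exact hρ
  | succ t ih =>
      intro s
      rw [stateDist_succ_eq]
      exact Finset.sum_nonneg fun s' _ => Finset.sum_nonneg fun a _ =>
        mul_nonneg (mul_nonneg (ih s') (hπ s' a)) (hP s' a s)

lemma Efun_bound (P : S → A → S → ℝ) (π πstar : S → A → ℝ) (f : ℝ → ℝ)
    (hPpos : ∀ s a s', 0 < P s a s') (hPsum : ∀ s a, ∑ s', P s a s' = 1)
    (hπpos : ∀ s a, 0 < π s a) (hπsum : ∀ s, ∑ a, π s a = 1)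
    (hπstarpos : ∀ s a, 0 < πstar s a) (hπstarsum : ∀ s, ∑ a, πstar s a = 1)
    (htri : ∀ (X : Type) [Fintype X] [Nonempty X], ∀ p q r : X → ℝ,
      (∀ x, 0 < p x) → (∀ x, 0 < q x) → (∀ x, 0 < r x) →
      (∑ x, p x = 1) → (∑ x, q x = 1) → (∑ x, r x = 1) →
      ∑ x, q x * f (p x / q x) ≤
        (∑ x, r x * f (p x / r x)) + ∑ x, q x * f (r x / q x))
    (T : ℕ) (hT : 1 ≤ T) :
    ∀ μ : S → ℝ, (∀ s, 0 ≤ μ s) →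
      ∑ s, μ s * Efun P π πstar f T s
        ≤ ∑ t ∈ Finset.range T, ∑ s, stateDist μ P π t s *
            ∑ a, π s a * f (πstar s a / π s a) := by
  induction T, hT using Nat.le_induction with
  | base =>
      intro μ hμ
      rw [Finset.sum_range_one]
      exact le_of_eq (Finset.sum_congr rfl fun s _ => by
        rw [Efun_one P π πstar f hPpos hPsum s]; rfl)
  | succ T hT ih =>
      intro μ hμ
      have step : ∑ s, μ s * Efun P π πstar f (T + 1) s
          ≤ ∑ s, μ s * ((∑ a, π s a * f (πstar s a / π s a))
              + ∑ a, ∑ s', π s a * P s a s' * Efun P π πstar f T s') :=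
        Finset.sum_le_sum fun s _ => mul_le_mul_of_nonneg_left
          (Efun_step P π πstar f hPpos hPsum hπpos hπsum hπstarpos hπstarsum htri T s) (hμ s)
      refine step.trans ?_
      simp only [mul_add, Finset.sum_add_distrib]
      rw [Finset.sum_range_succ']
      have hB : ∑ s, μ s * ∑ a, ∑ s', π s a * P s a s' * Efun P π πstar f T s'
          = ∑ s', stateDist μ P π 1 s' * Efun P π πstar f T s' := by
        calc ∑ s, μ s * ∑ a, ∑ s', π s a * P s a s' * Efun P π πstar f T s'
            = ∑ s, ∑ s', ∑ a, μ s * π s a * P s a s' * Efun P π πstar f T s' := by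
              refine Finset.sum_congr rfl fun s _ => ?_
              simp only [Finset.mul_sum]
              rw [Finset.sum_comm]
              exact Finset.sum_congr rfl fun s' _ => Finset.sum_congr rfl fun a _ => by ring
          _ = ∑ s', ∑ s, ∑ a, μ s * π s a * P s a s' * Efun P π πstar f T s' :=
              Finset.sum_comm
          _ = ∑ s', stateDist μ P π 1 s' * Efun P π πstar f T s' := by
              refine Finset.sum_congr rfl fun s' _ => ?_
              show _ = (∑ s, ∑ a, μ s * π s a * P s a s') * Efun P π πstar f T s'
              rw [Finset.sum_mul]
              exact Finset.sum_congr rfl fun s _ => by rw [Finset.sum_mul]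
      rw [hB]
      have hμ1 : ∀ s, 0 ≤ stateDist μ P π 1 s :=
        stateDist_nonneg μ P π hμ (fun s a => (hπpos s a).le)
          (fun s a s' => (hPpos s a s').le) 1
      have ih' := ih (stateDist μ P π 1) hμ1
      have hshift : ∑ t ∈ Finset.range T, ∑ s, stateDist (stateDist μ P π 1) P π t s *
            ∑ a, π s a * f (πstar s a / π s a)
          = ∑ t ∈ Finset.range T, ∑ s, stateDist μ P π (t + 1) s *
            ∑ a, π s a * f (πstar s a / π s a) := by
        refine Finset.sum_congr rfl fun t _ => Finset.sum_congr rfl fun s _ => ?_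
        rw [stateDist_shift]
      rw [hshift] at ih'
      have h0 : ∑ s, stateDist μ P π 0 s * ∑ a, π s a * f (πstar s a / π s a)
          = ∑ s, μ s * ∑ a, π s a * f (πstar s a / π s a) := rfl
      rw [h0]
      linarith
end Main2

/-- **Theorem 4 (upper bound).** If the f-divergence associated to `f` satisfies the
triangle inequality on every finite nonempty set, then the f-divergence between
trajectory distributions is upper bounded by `T` times the expected per-state
action-distribution f-divergence on states induced by `π`. -/
theorem traj_fdiv_le_action_fdiv
    {S A : Type} [Fintype S] [Nonempty S] [Fintype A] [Nonempty A]
    (ρ₀ : S → ℝ) (hρ₀pos : ∀ s, 0 < ρ₀ s) (hρ₀sum : ∑ s, ρ₀ s = 1)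
    (P : S → A → S → ℝ) (hPpos : ∀ s a s', 0 < P s a s')
    (hPsum : ∀ s a, ∑ s', P s a s' = 1)
    (T : ℕ) (hT : 1 ≤ T)
    (π πstar : S → A → ℝ)
    (hπpos : ∀ s a, 0 < π s a) (hπsum : ∀ s, ∑ a, π s a = 1)
    (hπstarpos : ∀ s a, 0 < πstar s a) (hπstarsum : ∀ s, ∑ a, πstar s a = 1)
    (f : ℝ → ℝ) (hf : ConvexOn ℝ (Set.Ici (0 : ℝ)) f)
    (htri : ∀ (X : Type) [Fintype X] [Nonempty X], ∀ p q r : X → ℝ,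
      (∀ x, 0 < p x) → (∀ x, 0 < q x) → (∀ x, 0 < r x) →
      (∑ x, p x = 1) → (∑ x, q x = 1) → (∑ x, r x = 1) →
      ∑ x, q x * f (p x / q x) ≤
        (∑ x, r x * f (p x / r x)) + ∑ x, q x * f (r x / q x)) :
    ∑ τ : S × (Fin T → A × S),
        trajProb ρ₀ P π τ * f (trajProb ρ₀ P πstar τ / trajProb ρ₀ P π τ) ≤
      (T : ℝ) * ∑ s : S, avgStateDist ρ₀ P π T s *
        ∑ a : A, π s a * f (πstar s a / π s a) := by
  have hLHS : ∑ τ : S × (Fin T → A × S),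
      trajProb ρ₀ P π τ * f (trajProb ρ₀ P πstar τ / trajProb ρ₀ P π τ)
      = ∑ s, ρ₀ s * Efun P π πstar f T s := by
    rw [Fintype.sum_prod_type]
    refine Finset.sum_congr rfl fun s _ => ?_
    have key : ∀ w : Fin T → A × S,
        trajProb ρ₀ P π (s, w) * f (trajProb ρ₀ P πstar (s, w) / trajProb ρ₀ P π (s, w))
        = ρ₀ s * (Wgen (fun _ => kpol π P) T s w *
            f (Wgen (fun _ => kpol πstar P) T s w / Wgen (fun _ => kpol π P) T s w)) := by
      intro w
      have e1 : trajProb ρ₀ P π (s, w) = ρ₀ s * Wgen (fun _ => kpol π P) T s w := rfl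
      have e2 : trajProb ρ₀ P πstar (s, w) = ρ₀ s * Wgen (fun _ => kpol πstar P) T s w := rfl
      rw [e1, e2, mul_div_mul_left _ _ (ne_of_gt (hρ₀pos s))]
      ring
    rw [Finset.sum_congr rfl fun w _ => key w, ← Finset.mul_sum]
    rfl
  have hRHS : (T : ℝ) * ∑ s : S, avgStateDist ρ₀ P π T s *
      ∑ a : A, π s a * f (πstar s a / π s a)
      = ∑ t ∈ Finset.range T, ∑ s, stateDist ρ₀ P π t s *
          ∑ a, π s a * f (πstar s a / π s a) := by
    have hT0 : (T : ℝ) ≠ 0 := by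
      have : (0 : ℝ) < T := by exact_mod_cast Nat.lt_of_lt_of_le Nat.zero_lt_one hT
      exact ne_of_gt this
    unfold avgStateDist
    rw [Finset.mul_sum]
    calc ∑ s, (T : ℝ) * ((1 / (T : ℝ) * ∑ t ∈ Finset.range T, stateDist ρ₀ P π t s) *
          ∑ a, π s a * f (πstar s a / π s a))
        = ∑ s, ∑ t ∈ Finset.range T, stateDist ρ₀ P π t s *
            ∑ a, π s a * f (πstar s a / π s a) := by
          refine Finset.sum_congr rfl fun s _ => ?_
          rw [← Finset.sum_mul]
          field_simp
      _ = _ := Finset.sum_comm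
  rw [hLHS, hRHS]
  exact Efun_bound P π πstar f hPpos hPsum hπpos hπsum hπstarpos hπstarsum htri T hT
    ρ₀ (fun s => (hρ₀pos s).le)

end
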